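/- Let $n \geq 1$, $\lambda_1 > 2$, and $0 < \alpha \leq n(\lambda_1-2)/2$. Let $I_1, I_2$ be cubes in $\mathbb{R}^n$ (with the $\ell^\infty$ metric) and suppose $(x_1,t_1) \in W_{I_2} := I_2 \times (\ell(I_2)/2, \ell(I_2))$. Then $\bigg[ \int_{\mathbb{R}^n} \bigg(\int_{I_1} \frac{dz_1}{(t_1 + |x_1 - y_1 - z_1|)^{n+\alpha}} \bigg)^2 \Big(\frac{t_1}{t_1 + |y_1|}\Big)^{n \lambda_1} \frac{dy_1}{t_1^n} \bigg]^{1/2} \lesssim \frac{|I_1|}{(\ell(I_2) + d(I_1,I_2))^{n + \alpha}}$, with implied constant depending only on $n$, $\alpha$, $\lambda_1$. -/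

import Mathlib

open MeasureTheory Set
open scoped ENNReal

noncomputable section

structure Cube (n : ℕ) where
  corner : Fin n → ℝ
  side : ℝ
  side_pos : 0 < side

namespace Cube

variable {n : ℕ}

/-- the cube as a subset of `ℝⁿ` (with the sup metric) -/
def toSet (I : Cube n) : Set (Fin n → ℝ) :=
  {x | ∀ i, I.corner i ≤ x i ∧ x i < I.corner i + I.side}

/-- Lebesgue measure of the cube -/
def vol (I : Cube n) : ℝ := I.side ^ n

def center (I : Cube n) : Fin n → ℝ := fun i => I.corner i + I.side / 2

/-- dyadic child of a cube, indexed by `ε : Fin n → Bool` -/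
def child (I : Cube n) (ε : Fin n → Bool) : Cube n :=
  ⟨fun i => I.corner i + (if ε i then I.side / 2 else 0), I.side / 2, by
    have := I.side_pos; linarith⟩

/-- the concentric cube of twice the side length -/
def double (I : Cube n) : Cube n :=
  ⟨fun i => I.corner i - I.side / 2, 2 * I.side, by have := I.side_pos; linarith⟩

end Cube

/-- distance between two sets in a metric space -/
def setDist' {X : Type*} [MetricSpace X] (A B : Set X) : ℝ :=
  sInf (Set.image2 dist A B)

/-- distance between two cubes (in the sup metric) -/
def cubeDist {n : ℕ} (I J : Cube n) : ℝ := setDist' I.toSet J.toSet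

/-- the long distance `D(I,J) = ℓ(I) + ℓ(J) + d(I,J)` -/
def longDist {n : ℕ} (I J : Cube n) : ℝ := I.side + J.side + cubeDist I J

/-- the dyadic cube of generation `p.1` and position `p.2` in the standard dyadic grid -/
def dyadicCube (n : ℕ) (p : ℤ × (Fin n → ℤ)) : Cube n :=
  ⟨fun i => (p.2 i : ℝ) * (2 : ℝ) ^ (-p.1), (2 : ℝ) ^ (-p.1), by positivity⟩

/-- index of the `k`-generation dyadic ancestor -/
def ancestor (n : ℕ) (k : ℕ) (p : ℤ × (Fin n → ℤ)) : ℤ × (Fin n → ℤ) :=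
  (p.1 - k, fun i => Int.fdiv (p.2 i) (2 ^ k))

/-- goodness of a dyadic cube with parameters `r`, `γ` : for every dyadic cube at least
`2^r` times bigger, the distance to its boundary exceeds `ℓ(I)^γ ℓ(J)^(1-γ)` -/
def isGood (n : ℕ) (r : ℕ) (γ : ℝ) (p : ℤ × (Fin n → ℤ)) : Prop :=
  ∀ q : ℤ × (Fin n → ℤ), 2 ^ r * (dyadicCube n p).side ≤ (dyadicCube n q).side →
    (dyadicCube n p).side ^ γ * (dyadicCube n q).side ^ (1 - γ)
      < setDist' (dyadicCube n p).toSet (frontier (dyadicCube n q).toSet)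

/-- The constant `∫ (1+‖y‖)^(-q)` over `ℝⁿ`. -/
def japC (n : ℕ) (q : ℝ) : ℝ := ∫ y : Fin n → ℝ, (1 + ‖y‖) ^ (-q)

lemma japC_nonneg (n : ℕ) (q : ℝ) : 0 ≤ japC n q :=
  integral_nonneg fun y => Real.rpow_nonneg (by positivity) _

lemma finrank_fin_fun_real (n : ℕ) : Module.finrank ℝ (Fin n → ℝ) = n := by
  simp [Module.finrank_fin_fun]

lemma integrable_one_add' {n : ℕ} {q : ℝ} (hq : (n : ℝ) < q) :
    Integrable (fun y : Fin n → ℝ => (1 + ‖y‖) ^ (-q)) := by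
  apply integrable_one_add_norm (μ := volume)
  rw [finrank_fin_fun_real]; exact hq

lemma shift_pow_key {n : ℕ} {t q : ℝ} (ht : 0 < t) (y : Fin n → ℝ) :
    (t + ‖y‖) ^ (-q) = t ^ (-q) * (1 + ‖t⁻¹ • y‖) ^ (-q) := by
  rw [norm_smul, norm_inv, Real.norm_eq_abs, abs_of_pos ht]
  have h1 : 1 + t⁻¹ * ‖y‖ = t⁻¹ * (t + ‖y‖) := by field_simp
  rw [h1, Real.mul_rpow (by positivity) (by positivity), Real.inv_rpow ht.le, ← mul_assoc,
    mul_inv_cancel₀ (Real.rpow_pos_of_pos ht _).ne', one_mul]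

lemma integrable_shift_pow {n : ℕ} {t q : ℝ} (ht : 0 < t) (hq : (n : ℝ) < q) :
    Integrable (fun y : Fin n → ℝ => (t + ‖y‖) ^ (-q)) := by
  have h : Integrable (fun y : Fin n → ℝ => (1 + ‖t⁻¹ • y‖) ^ (-q)) := by
    have := (integrable_one_add' hq).comp_smul (μ := volume) (inv_ne_zero ht.ne')
    simpa using this
  exact (h.const_mul (t ^ (-q))).congr (ae_of_all _ fun y => (shift_pow_key ht y).symm)

lemma integral_shift_pow {n : ℕ} {t q : ℝ} (ht : 0 < t) :
    ∫ y : Fin n → ℝ, (t + ‖y‖) ^ (-q) = t ^ ((n : ℝ) - q) * japC n q := by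
  calc ∫ y : Fin n → ℝ, (t + ‖y‖) ^ (-q)
      = ∫ y : Fin n → ℝ, t ^ (-q) * (1 + ‖t⁻¹ • y‖) ^ (-q) := by
        simp only [shift_pow_key ht]
    _ = t ^ (-q) * ∫ y : Fin n → ℝ, (1 + ‖t⁻¹ • y‖) ^ (-q) := integral_const_mul _ _
    _ = t ^ (-q) * (t ^ (Module.finrank ℝ (Fin n → ℝ)) •
          ∫ y : Fin n → ℝ, (1 + ‖y‖) ^ (-q)) := by
        rw [Measure.integral_comp_inv_smul_of_nonneg volume
          (fun y : Fin n → ℝ => (1 + ‖y‖) ^ (-q)) ht.le]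
    _ = t ^ ((n : ℝ) - q) * japC n q := by
        rw [finrank_fin_fun_real, smul_eq_mul, ← mul_assoc, ← Real.rpow_natCast t n,
          ← Real.rpow_add ht, japC]
        rw [show -q + (n : ℝ) = (n : ℝ) - q by ring]

lemma integrable_shift_sub {n : ℕ} {t q : ℝ} (ht : 0 < t) (hq : (n : ℝ) < q)
    (u : Fin n → ℝ) : Integrable (fun y : Fin n → ℝ => (t + ‖u - y‖) ^ (-q)) :=
  (integrable_shift_pow ht hq).comp_sub_left u

lemma integral_shift_sub {n : ℕ} {t q : ℝ} (ht : 0 < t) (u : Fin n → ℝ) :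
    ∫ y : Fin n → ℝ, (t + ‖u - y‖) ^ (-q) = t ^ ((n : ℝ) - q) * japC n q := by
  rw [integral_sub_left_eq_self (fun y : Fin n → ℝ => (t + ‖y‖) ^ (-q)) volume u]
  exact integral_shift_pow ht
lemma two_rpow_mul_rpow_neg {c A : ℝ} (hc : 0 < c) :
    (c / 2) ^ (-A) = 2 ^ A * c ^ (-A) := by
  rw [Real.div_rpow hc.le (by norm_num), Real.rpow_neg (by norm_num : (0:ℝ) ≤ 2),
    div_eq_mul_inv, inv_inv, mul_comm]

lemma pointwise_split {t A B : ℝ} (ht : 0 < t) (hA : 0 ≤ A) (hAB : A ≤ B)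
    {X : Type*} [NormedAddCommGroup X] (u y : X) :
    (t + ‖u - y‖) ^ (-A) * (t + ‖y‖) ^ (-B)
      ≤ 2 ^ A * (t + ‖u‖) ^ (-A)
          * (t ^ (A - B) * (t + ‖u - y‖) ^ (-A) + (t + ‖y‖) ^ (-B)) := by
  have ha : 0 < t + ‖u - y‖ := by positivity
  have hb : 0 < t + ‖y‖ := by positivity
  have hc : 0 < t + ‖u‖ := by positivity
  have htri : t + ‖u‖ ≤ (t + ‖u - y‖) + (t + ‖y‖) := by
    have := norm_sub_norm_le u y
    have h2 := norm_add_le (u - y) y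
    simp only [sub_add_cancel] at h2
    linarith
  rcases le_total (t + ‖u‖) (2 * (t + ‖y‖)) with hcb | hcb
  · -- use the first summand
    have h1 : (t + ‖y‖) ^ (-A) ≤ 2 ^ A * (t + ‖u‖) ^ (-A) := by
      rw [← two_rpow_mul_rpow_neg hc]
      exact Real.rpow_le_rpow_of_nonpos (by linarith) (by linarith) (by linarith)
    have h2 : (t + ‖y‖) ^ (A - B) ≤ t ^ (A - B) :=
      Real.rpow_le_rpow_of_nonpos ht (by linarith [norm_nonneg y]) (by linarith)
    have hsplit : (t + ‖y‖) ^ (-B) = (t + ‖y‖) ^ (-A) * (t + ‖y‖) ^ (A - B) := by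
      rw [← Real.rpow_add hb]; ring_nf
    calc (t + ‖u - y‖) ^ (-A) * (t + ‖y‖) ^ (-B)
        = (t + ‖u - y‖) ^ (-A) * ((t + ‖y‖) ^ (-A) * (t + ‖y‖) ^ (A - B)) := by
          rw [hsplit]
      _ ≤ (t + ‖u - y‖) ^ (-A) * ((2 ^ A * (t + ‖u‖) ^ (-A)) * t ^ (A - B)) := by
          refine mul_le_mul_of_nonneg_left ?_ (by positivity)
          exact mul_le_mul h1 h2 (by positivity) (by positivity)
      _ = 2 ^ A * (t + ‖u‖) ^ (-A) * (t ^ (A - B) * (t + ‖u - y‖) ^ (-A)) := by ring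
      _ ≤ _ := by
          have : (0:ℝ) ≤ (t + ‖y‖) ^ (-B) := by positivity
          nlinarith [Real.rpow_nonneg (le_of_lt hc) (-A), Real.rpow_nonneg (by norm_num : (0:ℝ) ≤ 2) A,
            mul_nonneg (Real.rpow_nonneg (by norm_num : (0:ℝ) ≤ 2) A) (Real.rpow_nonneg (le_of_lt hc) (-A))]
  · -- then t + ‖u-y‖ ≥ (t+‖u‖)/2
    have h1 : (t + ‖u - y‖) ^ (-A) ≤ 2 ^ A * (t + ‖u‖) ^ (-A) := by
      rw [← two_rpow_mul_rpow_neg hc]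
      exact Real.rpow_le_rpow_of_nonpos (by linarith) (by linarith) (by linarith)
    calc (t + ‖u - y‖) ^ (-A) * (t + ‖y‖) ^ (-B)
        ≤ (2 ^ A * (t + ‖u‖) ^ (-A)) * (t + ‖y‖) ^ (-B) := by
          gcongr
      _ ≤ _ := by
          have h3 : (0:ℝ) ≤ t ^ (A - B) * (t + ‖u - y‖) ^ (-A) := by positivity
          have h4 : (0:ℝ) ≤ 2 ^ A * (t + ‖u‖) ^ (-A) := by positivity
          nlinarith
lemma conv_bound {n : ℕ} {t A B : ℝ} (ht : 0 < t) (hA0 : 0 ≤ A) (hA : (n : ℝ) < A)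
    (hAB : A ≤ B) (u : Fin n → ℝ) :
    ∫⁻ y : Fin n → ℝ, ENNReal.ofReal ((t + ‖u - y‖) ^ (-A) * (t + ‖y‖) ^ (-B))
      ≤ ENNReal.ofReal (2 ^ A * (japC n A + japC n B)
          * ((t + ‖u‖) ^ (-A) * t ^ ((n : ℝ) - B))) := by
  have hB : (n : ℝ) < B := hA.trans_le hAB
  have hint1 : Integrable (fun y : Fin n → ℝ => (t + ‖u - y‖) ^ (-A)) :=
    integrable_shift_sub ht hA u
  have hint2 : Integrable (fun y : Fin n → ℝ => (t + ‖y‖) ^ (-B)) :=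
    integrable_shift_pow ht hB
  have hg_int : Integrable (fun y : Fin n → ℝ =>
      2 ^ A * (t + ‖u‖) ^ (-A)
        * (t ^ (A - B) * (t + ‖u - y‖) ^ (-A) + (t + ‖y‖) ^ (-B))) :=
    ((hint1.const_mul _).add hint2).const_mul _
  calc ∫⁻ y : Fin n → ℝ, ENNReal.ofReal ((t + ‖u - y‖) ^ (-A) * (t + ‖y‖) ^ (-B))
      ≤ ∫⁻ y : Fin n → ℝ, ENNReal.ofReal (2 ^ A * (t + ‖u‖) ^ (-A)
          * (t ^ (A - B) * (t + ‖u - y‖) ^ (-A) + (t + ‖y‖) ^ (-B))) :=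
        lintegral_mono fun y => ENNReal.ofReal_le_ofReal (pointwise_split ht hA0 hAB u y)
    _ = ENNReal.ofReal (∫ y : Fin n → ℝ, 2 ^ A * (t + ‖u‖) ^ (-A)
          * (t ^ (A - B) * (t + ‖u - y‖) ^ (-A) + (t + ‖y‖) ^ (-B))) :=
        (MeasureTheory.ofReal_integral_eq_lintegral_ofReal hg_int
          (ae_of_all _ fun y => by positivity)).symm
    _ = ENNReal.ofReal (2 ^ A * (japC n A + japC n B)
          * ((t + ‖u‖) ^ (-A) * t ^ ((n : ℝ) - B))) := by
        congr 1
        rw [integral_const_mul, integral_add (hint1.const_mul _) hint2, integral_const_mul,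
          integral_shift_sub ht u, integral_shift_pow ht, ← mul_assoc,
          ← Real.rpow_add ht, show A - B + ((n : ℝ) - A) = (n : ℝ) - B by ring]
        ring

lemma Cube.toSet_eq_pi {n : ℕ} (I : Cube n) :
    I.toSet = Set.pi Set.univ fun i => Set.Ico (I.corner i) (I.corner i + I.side) := by
  ext x; simp [Cube.toSet, Set.mem_pi, Set.mem_Ico]

lemma Cube.measurableSet_toSet {n : ℕ} (I : Cube n) : MeasurableSet I.toSet := by
  rw [I.toSet_eq_pi]; exact MeasurableSet.univ_pi fun i => measurableSet_Ico

lemma Cube.volume_toSet {n : ℕ} (I : Cube n) :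
    volume I.toSet = ENNReal.ofReal I.vol := by
  rw [I.toSet_eq_pi, volume_pi_pi]
  simp only [Real.volume_Ico, add_sub_cancel_left, Finset.prod_const, Finset.card_univ,
    Fintype.card_fin]
  rw [Cube.vol, ENNReal.ofReal_pow I.side_pos.le]

lemma Cube.nonempty_toSet {n : ℕ} (I : Cube n) : I.toSet.Nonempty :=
  ⟨I.corner, fun i => ⟨le_refl _, by have := I.side_pos; linarith⟩⟩

lemma cubeDist_nonneg {n : ℕ} (I J : Cube n) : 0 ≤ cubeDist I J := by
  apply Real.sInf_nonneg
  rintro r ⟨a, _, b, _, rfl⟩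
  exact dist_nonneg

lemma cubeDist_le {n : ℕ} (I J : Cube n) {z x : Fin n → ℝ}
    (hz : z ∈ I.toSet) (hx : x ∈ J.toSet) : cubeDist I J ≤ ‖x - z‖ := by
  have hmem : dist z x ∈ Set.image2 dist I.toSet J.toSet := ⟨z, hz, x, hx, rfl⟩
  have := csInf_le ⟨0, fun r hr => by
    obtain ⟨a, _, b, _, rfl⟩ := hr; exact dist_nonneg⟩ hmem
  rwa [dist_eq_norm, ← norm_sub_rev] at this

/-- the weighted kernel estimate over the Whitney region. -/
theorem stmt_1 (n : ℕ) (hn : 1 ≤ n) (lam₁ α : ℝ) (hlam : 2 < lam₁) (hα : 0 < α)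
    (hαn : α ≤ n * (lam₁ - 2) / 2) :
    ∃ C > 0, ∀ (I₁ I₂ : Cube n) (x₁ : Fin n → ℝ) (t₁ : ℝ),
      x₁ ∈ I₂.toSet → t₁ ∈ Set.Ioo (I₂.side / 2) I₂.side →
      (∫ y₁, (∫ z₁ in I₁.toSet, ((t₁ + ‖x₁ - y₁ - z₁‖) ^ ((n : ℝ) + α))⁻¹) ^ 2
          * (t₁ / (t₁ + ‖y₁‖)) ^ ((n : ℝ) * lam₁) / t₁ ^ (n : ℝ)) ^ ((1 : ℝ) / 2)
        ≤ C * I₁.vol / (I₂.side + cubeDist I₁ I₂) ^ ((n : ℝ) + α) := by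
  have hn0 : (0 : ℝ) < n := by exact_mod_cast hn
  set β : ℝ := (n : ℝ) + α with hβ_def
  set A : ℝ := 2 * ((n : ℝ) + α) with hA_def
  set B : ℝ := (n : ℝ) * lam₁ with hB_def
  have hβ0 : 0 < β := by rw [hβ_def]; positivity
  have hA0 : 0 ≤ A := by rw [hA_def]; positivity
  have hnA : (n : ℝ) < A := by rw [hA_def]; linarith
  have hAB : A ≤ B := by rw [hA_def, hB_def]; nlinarith
  have hnB : (n : ℝ) < B := hnA.trans_le hAB
  set Cc : ℝ := 2 ^ A * (japC n A + japC n B) with hCc_def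
  have hCc0 : 0 ≤ Cc := by
    rw [hCc_def]
    exact mul_nonneg (Real.rpow_nonneg (by norm_num) _)
      (add_nonneg (japC_nonneg _ _) (japC_nonneg _ _))
  set s0 : ℝ := Real.sqrt (Cc * 2 ^ A) with hs0_def
  have hs00 : 0 ≤ s0 := Real.sqrt_nonneg _
  refine ⟨s0 + 1, by positivity, ?_⟩
  intro I₁ I₂ x₁ t₁ hx ht
  obtain ⟨ht1, ht2⟩ := ht
  have hside := I₂.side_pos
  have ht0 : 0 < t₁ := (half_pos hside).trans ht1
  have hd0 : 0 ≤ cubeDist I₁ I₂ := cubeDist_nonneg _ _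
  set d := cubeDist I₁ I₂ with hd_def
  set D := I₂.side + d with hD_def
  have hD0 : 0 < D := by rw [hD_def]; linarith
  have hkey : ∀ z ∈ I₁.toSet, D / 2 ≤ t₁ + ‖x₁ - z‖ := by
    intro z hz
    have h1 : d ≤ ‖x₁ - z‖ := cubeDist_le I₁ I₂ hz hx
    rw [hD_def]; linarith
  have hvol0 : 0 < I₁.vol := pow_pos I₁.side_pos n
  set S := I₁.toSet with hS_def
  have hμS : volume S = ENNReal.ofReal I₁.vol := I₁.volume_toSet
  have hμS_ne : volume S ≠ ⊤ := by rw [hμS]; exact ENNReal.ofReal_ne_top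
  set k : (Fin n → ℝ) → (Fin n → ℝ) → ℝ := fun y z => (t₁ + ‖x₁ - y - z‖) ^ (-β)
    with hk_def
  have hkpos : ∀ y z : Fin n → ℝ, 0 < t₁ + ‖x₁ - y - z‖ := fun y z => by positivity
  have hrw : ∀ y z : Fin n → ℝ, ((t₁ + ‖x₁ - y - z‖) ^ β)⁻¹ = k y z := fun y z =>
    (Real.rpow_neg (hkpos y z).le _).symm
  simp only [hrw]
  -- continuity and measurability
  have hk_cont : Continuous fun p : (Fin n → ℝ) × (Fin n → ℝ) => k p.1 p.2 := by
    apply Continuous.rpow_const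
    · fun_prop
    · intro p; left; positivity
  have hw_cont : Continuous fun y : Fin n → ℝ => (t₁ / (t₁ + ‖y‖)) ^ B := by
    apply Continuous.rpow_const
    · exact continuous_const.div (by fun_prop) (fun y => by positivity)
    · intro y; left; positivity
  have hK_sm : StronglyMeasurable fun y : Fin n → ℝ => ∫ z in S, k y z :=
    hk_cont.stronglyMeasurable.integral_prod_right'
  have hw_nonneg : ∀ y : Fin n → ℝ, (0 : ℝ) ≤ (t₁ / (t₁ + ‖y‖)) ^ B := fun y =>
    Real.rpow_nonneg (by positivity) _
  have hf_nonneg : ∀ y : Fin n → ℝ,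
      0 ≤ (∫ z in S, k y z) ^ 2 * (t₁ / (t₁ + ‖y‖)) ^ B / t₁ ^ (n : ℝ) := fun y =>
    div_nonneg (mul_nonneg (sq_nonneg _) (hw_nonneg y)) (Real.rpow_nonneg ht0.le _)
  have hf_meas : AEStronglyMeasurable
      (fun y : Fin n → ℝ => (∫ z in S, k y z) ^ 2 * (t₁ / (t₁ + ‖y‖)) ^ B / t₁ ^ (n : ℝ))
      volume :=
    (((hK_sm.measurable.pow_const 2).mul hw_cont.measurable).div_const _).aestronglyMeasurable
  rw [integral_eq_lintegral_of_nonneg_ae (ae_of_all _ hf_nonneg) hf_meas]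
  -- finiteness of restricted measure; integrability of kernel slices
  haveI hfin : IsFiniteMeasure (volume.restrict S) :=
    ⟨by rw [Measure.restrict_apply_univ, hμS]; exact ENNReal.ofReal_lt_top⟩
  have hky_cont : ∀ y : Fin n → ℝ, Continuous (fun z => k y z) := by
    intro y
    simp only [hk_def]
    apply Continuous.rpow_const
    · fun_prop
    · intro z; left; positivity
  have hk_int : ∀ y : Fin n → ℝ, Integrable (fun z => k y z) (volume.restrict S) := by
    intro y
    refine (integrable_const (t₁ ^ (-β))).mono' ((hky_cont y).aestronglyMeasurable)
      (ae_of_all _ fun z => ?_)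
    rw [Real.norm_eq_abs, abs_of_nonneg (Real.rpow_nonneg (hkpos y z).le _)]
    exact Real.rpow_le_rpow_of_nonpos ht0
      (le_add_of_nonneg_right (norm_nonneg _)) (by linarith)
  have hK_eq : ∀ y : Fin n → ℝ,
      ENNReal.ofReal (∫ z in S, k y z) = ∫⁻ z in S, ENNReal.ofReal (k y z) := fun y =>
    MeasureTheory.ofReal_integral_eq_lintegral_ofReal (hk_int y)
      (ae_of_all _ fun z => Real.rpow_nonneg (hkpos y z).le _)
  -- Cauchy-Schwarz
  have hrpow_two : ∀ x : ℝ≥0∞, x ^ (2 : ℝ) = x ^ (2 : ℕ) := fun x => by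
    rw [← ENNReal.rpow_natCast x 2]; norm_num
  have hCS : ∀ y : Fin n → ℝ, (∫⁻ z in S, ENNReal.ofReal (k y z)) ^ 2
      ≤ volume S * ∫⁻ z in S, (ENNReal.ofReal (k y z)) ^ 2 := by
    intro y
    have h2 : Real.HolderConjugate 2 2 := Real.HolderConjugate.two_two
    have hFm : AEMeasurable (fun z => ENNReal.ofReal (k y z)) (volume.restrict S) :=
      ((hky_cont y).measurable.ennreal_ofReal).aemeasurable
    have hH := ENNReal.lintegral_mul_le_Lp_mul_Lq (volume.restrict S) h2 hFm
      (aemeasurable_const (b := (1 : ℝ≥0∞)))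
    simp only [Pi.mul_apply, mul_one, ENNReal.one_rpow, lintegral_const, one_mul,
      Measure.restrict_apply_univ] at hH
    calc (∫⁻ z in S, ENNReal.ofReal (k y z)) ^ 2
        ≤ ((∫⁻ z in S, ENNReal.ofReal (k y z) ^ (2:ℝ)) ^ ((1:ℝ)/2)
            * (volume S) ^ ((1:ℝ)/2)) ^ 2 := by
          rw [sq, sq]; exact mul_le_mul' hH hH
      _ = (∫⁻ z in S, ENNReal.ofReal (k y z) ^ (2:ℝ)) * volume S := by
          rw [mul_pow, ← ENNReal.rpow_natCast (_ ^ ((1:ℝ)/2)) 2,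
            ← ENNReal.rpow_natCast ((volume S) ^ ((1:ℝ)/2)) 2, ← ENNReal.rpow_mul,
            ← ENNReal.rpow_mul]
          norm_num
      _ = volume S * ∫⁻ z in S, (ENNReal.ofReal (k y z)) ^ 2 := by
          simp only [hrpow_two]; rw [mul_comm]
  set T := ENNReal.ofReal (t₁ ^ (n : ℝ)) with hT_def
  have hT_ne_zero : T ≠ 0 := by
    rw [hT_def]
    exact (ENNReal.ofReal_pos.mpr (Real.rpow_pos_of_pos ht0 _)).ne'
  have hT_ne_top : T ≠ ⊤ := ENNReal.ofReal_ne_top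
  have hTinv_ne_top : T⁻¹ ≠ ⊤ := ENNReal.inv_ne_top.mpr hT_ne_zero
  -- step 1 : pointwise bound after Cauchy-Schwarz
  have step1 : ∀ y : Fin n → ℝ,
      ENNReal.ofReal ((∫ z in S, k y z) ^ 2 * (t₁ / (t₁ + ‖y‖)) ^ B / t₁ ^ (n : ℝ))
        ≤ volume S * T⁻¹
            * ∫⁻ z in S, ENNReal.ofReal (k y z) ^ 2
                * ENNReal.ofReal ((t₁ / (t₁ + ‖y‖)) ^ B) := by
    intro y
    rw [ENNReal.ofReal_div_of_pos (Real.rpow_pos_of_pos ht0 _),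
      ENNReal.ofReal_mul (sq_nonneg _),
      ENNReal.ofReal_pow (integral_nonneg fun z => Real.rpow_nonneg (hkpos y z).le _),
      hK_eq y, lintegral_mul_const' _ _ ENNReal.ofReal_ne_top, div_eq_mul_inv, ← hT_def]
    have h9 := mul_le_mul_left
      (mul_le_mul_left (hCS y) (ENNReal.ofReal ((t₁ / (t₁ + ‖y‖)) ^ B))) T⁻¹
    calc (∫⁻ z in S, ENNReal.ofReal (k y z)) ^ 2
          * ENNReal.ofReal ((t₁ / (t₁ + ‖y‖)) ^ B) * T⁻¹
        ≤ volume S * (∫⁻ z in S, ENNReal.ofReal (k y z) ^ 2)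
            * ENNReal.ofReal ((t₁ / (t₁ + ‖y‖)) ^ B) * T⁻¹ := h9
      _ = volume S * T⁻¹ * ((∫⁻ z in S, ENNReal.ofReal (k y z) ^ 2)
            * ENNReal.ofReal ((t₁ / (t₁ + ‖y‖)) ^ B)) := by ring
    -- step 2 : integrate the pointwise bound
  have step2 : (∫⁻ y : Fin n → ℝ, ENNReal.ofReal
        ((∫ z in S, k y z) ^ 2 * (t₁ / (t₁ + ‖y‖)) ^ B / t₁ ^ (n : ℝ)))
      ≤ volume S * T⁻¹ * ∫⁻ y : Fin n → ℝ, ∫⁻ z in S,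
          ENNReal.ofReal (k y z) ^ 2 * ENNReal.ofReal ((t₁ / (t₁ + ‖y‖)) ^ B) := by
    calc _ ≤ ∫⁻ y : Fin n → ℝ, volume S * T⁻¹ * ∫⁻ z in S,
            ENNReal.ofReal (k y z) ^ 2 * ENNReal.ofReal ((t₁ / (t₁ + ‖y‖)) ^ B) :=
          lintegral_mono step1
      _ = _ := lintegral_const_mul' _ _ (ENNReal.mul_ne_top hμS_ne hTinv_ne_top)
  -- step 3 : swap the integrals (Tonelli)
  have hH_meas : Measurable (Function.uncurry fun y z : Fin n → ℝ =>
      ENNReal.ofReal (k y z) ^ 2 * ENNReal.ofReal ((t₁ / (t₁ + ‖y‖)) ^ B)) := by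
    refine Measurable.mul (f := fun p : (Fin n → ℝ) × (Fin n → ℝ) => ENNReal.ofReal (k p.1 p.2) ^ 2) (g := fun p : (Fin n → ℝ) × (Fin n → ℝ) => ENNReal.ofReal ((t₁ / (t₁ + ‖p.1‖)) ^ B)) ?_ ?_
    · exact (hk_cont.measurable.ennreal_ofReal).pow_const 2
    · exact ((hw_cont.measurable).comp measurable_fst).ennreal_ofReal
  have step3 : (∫⁻ y : Fin n → ℝ, ∫⁻ z in S,
        ENNReal.ofReal (k y z) ^ 2 * ENNReal.ofReal ((t₁ / (t₁ + ‖y‖)) ^ B))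
      = ∫⁻ z in S, ∫⁻ y : Fin n → ℝ,
        ENNReal.ofReal (k y z) ^ 2 * ENNReal.ofReal ((t₁ / (t₁ + ‖y‖)) ^ B) :=
    lintegral_lintegral_swap hH_meas.aemeasurable
  -- step 4 : the per-`z` convolution estimate
  have step4 : ∀ z ∈ S, (∫⁻ y : Fin n → ℝ,
        ENNReal.ofReal (k y z) ^ 2 * ENNReal.ofReal ((t₁ / (t₁ + ‖y‖)) ^ B))
      ≤ ENNReal.ofReal (Cc * (2 ^ A * D ^ (-A)) * t₁ ^ (n : ℝ)) := by
    intro z hz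
    have hu : D / 2 ≤ t₁ + ‖x₁ - z‖ := hkey z hz
    have hpt : ∀ y : Fin n → ℝ,
        ENNReal.ofReal (k y z) ^ 2 * ENNReal.ofReal ((t₁ / (t₁ + ‖y‖)) ^ B)
          = ENNReal.ofReal (t₁ ^ B)
              * ENNReal.ofReal ((t₁ + ‖(x₁ - z) - y‖) ^ (-A) * (t₁ + ‖y‖) ^ (-B)) := by
      intro y
      have e1 : k y z ^ 2 = (t₁ + ‖(x₁ - z) - y‖) ^ (-A) := by
        simp only [hk_def]
        rw [show x₁ - y - z = (x₁ - z) - y by abel]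
        rw [← Real.rpow_natCast ((t₁ + ‖x₁ - z - y‖) ^ (-β)) 2,
          ← Real.rpow_mul (by positivity)]
        norm_num
        rw [hβ_def, hA_def]; ring_nf
      have e2 : (t₁ / (t₁ + ‖y‖)) ^ B = t₁ ^ B * (t₁ + ‖y‖) ^ (-B) := by
        rw [Real.div_rpow ht0.le (by positivity), Real.rpow_neg (by positivity),
          div_eq_mul_inv]
      rw [← ENNReal.ofReal_pow (by simp only [hk_def]; positivity), e1, e2,
        ENNReal.ofReal_mul (Real.rpow_nonneg ht0.le _),
        ENNReal.ofReal_mul (Real.rpow_nonneg (by positivity) _)]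
      ring
    calc (∫⁻ y : Fin n → ℝ,
          ENNReal.ofReal (k y z) ^ 2 * ENNReal.ofReal ((t₁ / (t₁ + ‖y‖)) ^ B))
        = ∫⁻ y : Fin n → ℝ, ENNReal.ofReal (t₁ ^ B)
            * ENNReal.ofReal ((t₁ + ‖(x₁ - z) - y‖) ^ (-A) * (t₁ + ‖y‖) ^ (-B)) :=
          lintegral_congr hpt
      _ = ENNReal.ofReal (t₁ ^ B) * ∫⁻ y : Fin n → ℝ,
            ENNReal.ofReal ((t₁ + ‖(x₁ - z) - y‖) ^ (-A) * (t₁ + ‖y‖) ^ (-B)) :=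
          lintegral_const_mul' _ _ ENNReal.ofReal_ne_top
      _ ≤ ENNReal.ofReal (t₁ ^ B) * ENNReal.ofReal (2 ^ A * (japC n A + japC n B)
            * ((t₁ + ‖x₁ - z‖) ^ (-A) * t₁ ^ ((n : ℝ) - B))) :=
          mul_le_mul_right (conv_bound ht0 hA0 hnA hAB _) _
      _ ≤ ENNReal.ofReal (Cc * (2 ^ A * D ^ (-A)) * t₁ ^ (n : ℝ)) := by
          rw [← ENNReal.ofReal_mul (Real.rpow_nonneg ht0.le _)]
          apply ENNReal.ofReal_le_ofReal
          have h5 : (t₁ + ‖x₁ - z‖) ^ (-A) ≤ 2 ^ A * D ^ (-A) := by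
            rw [← two_rpow_mul_rpow_neg hD0]
            exact Real.rpow_le_rpow_of_nonpos (by linarith) hu (by linarith)
          have h6 : t₁ ^ B * t₁ ^ ((n : ℝ) - B) = t₁ ^ (n : ℝ) := by
            rw [← Real.rpow_add ht0]; ring_nf
          calc t₁ ^ B * (2 ^ A * (japC n A + japC n B)
                * ((t₁ + ‖x₁ - z‖) ^ (-A) * t₁ ^ ((n : ℝ) - B)))
              ≤ t₁ ^ B * (2 ^ A * (japC n A + japC n B)
                * ((2 ^ A * D ^ (-A)) * t₁ ^ ((n : ℝ) - B))) := by
                refine mul_le_mul_of_nonneg_left ?_ (Real.rpow_nonneg ht0.le _)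
                refine mul_le_mul_of_nonneg_left ?_
                  (mul_nonneg (Real.rpow_nonneg (by norm_num) _)
                    (add_nonneg (japC_nonneg _ _) (japC_nonneg _ _)))
                exact mul_le_mul_of_nonneg_right h5 (Real.rpow_nonneg ht0.le _)
            _ = Cc * (2 ^ A * D ^ (-A)) * t₁ ^ (n : ℝ) := by
                rw [hCc_def, ← h6]; ring
  -- step 5 : integrate over `z`
  have step5 : (∫⁻ z in S, ∫⁻ y : Fin n → ℝ,
        ENNReal.ofReal (k y z) ^ 2 * ENNReal.ofReal ((t₁ / (t₁ + ‖y‖)) ^ B))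
      ≤ ENNReal.ofReal (Cc * (2 ^ A * D ^ (-A)) * t₁ ^ (n : ℝ)) * volume S := by
    calc _ ≤ ∫⁻ _z in S, ENNReal.ofReal (Cc * (2 ^ A * D ^ (-A)) * t₁ ^ (n : ℝ)) :=
          setLIntegral_mono measurable_const step4
      _ = _ := setLIntegral_const _ _
  -- assemble the lintegral bound
  have Lbound : (∫⁻ y : Fin n → ℝ, ENNReal.ofReal
        ((∫ z in S, k y z) ^ 2 * (t₁ / (t₁ + ‖y‖)) ^ B / t₁ ^ (n : ℝ)))
      ≤ ENNReal.ofReal (I₁.vol ^ 2 * (Cc * (2 ^ A * D ^ (-A)))) := by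
    have hsplitT : ENNReal.ofReal (Cc * (2 ^ A * D ^ (-A)) * t₁ ^ (n : ℝ))
        = ENNReal.ofReal (Cc * (2 ^ A * D ^ (-A))) * T :=
      ENNReal.ofReal_mul (mul_nonneg hCc0 (by positivity))
    have hT1 : T⁻¹ * T = 1 := by
      rw [mul_comm]; exact ENNReal.mul_inv_cancel hT_ne_zero hT_ne_top
    calc _ ≤ volume S * T⁻¹ * ∫⁻ y : Fin n → ℝ, ∫⁻ z in S,
            ENNReal.ofReal (k y z) ^ 2 * ENNReal.ofReal ((t₁ / (t₁ + ‖y‖)) ^ B) := step2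
      _ = volume S * T⁻¹ * ∫⁻ z in S, ∫⁻ y : Fin n → ℝ,
            ENNReal.ofReal (k y z) ^ 2 * ENNReal.ofReal ((t₁ / (t₁ + ‖y‖)) ^ B) := by
          rw [step3]
      _ ≤ volume S * T⁻¹
            * (ENNReal.ofReal (Cc * (2 ^ A * D ^ (-A)) * t₁ ^ (n : ℝ)) * volume S) :=
          mul_le_mul_right step5 _
      _ = ENNReal.ofReal (I₁.vol ^ 2 * (Cc * (2 ^ A * D ^ (-A)))) := by
          rw [hsplitT, hμS]
          calc ENNReal.ofReal I₁.vol * T⁻¹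
                * (ENNReal.ofReal (Cc * (2 ^ A * D ^ (-A))) * T * ENNReal.ofReal I₁.vol)
              = (T⁻¹ * T) * (ENNReal.ofReal I₁.vol * ENNReal.ofReal I₁.vol
                  * ENNReal.ofReal (Cc * (2 ^ A * D ^ (-A)))) := by ring
            _ = ENNReal.ofReal (I₁.vol ^ 2 * (Cc * (2 ^ A * D ^ (-A)))) := by
                rw [hT1, one_mul, ← ENNReal.ofReal_mul hvol0.le,
                  ← ENNReal.ofReal_mul (mul_nonneg hvol0.le hvol0.le)]
                congr 1; ring
  -- conclusion
  have htoReal : (∫⁻ y : Fin n → ℝ, ENNReal.ofReal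
        ((∫ z in S, k y z) ^ 2 * (t₁ / (t₁ + ‖y‖)) ^ B / t₁ ^ (n : ℝ))).toReal
      ≤ I₁.vol ^ 2 * (Cc * (2 ^ A * D ^ (-A))) :=
    ENNReal.toReal_le_of_le_ofReal
      (mul_nonneg (by positivity) (mul_nonneg hCc0 (by positivity))) Lbound
  set R : ℝ := s0 * I₁.vol / D ^ β with hR_def
  have hR0 : 0 ≤ R := by
    rw [hR_def]
    exact div_nonneg (mul_nonneg hs00 hvol0.le) (Real.rpow_nonneg hD0.le _)
  have hval : I₁.vol ^ 2 * (Cc * (2 ^ A * D ^ (-A))) = R ^ 2 := by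
    rw [hR_def]
    have h7 : D ^ (-A) = ((D ^ β) ⁻¹) * ((D ^ β)⁻¹) := by
      rw [show -A = -β + -β by rw [hA_def, hβ_def]; ring, Real.rpow_add hD0,
        Real.rpow_neg hD0.le]
    have h8 : s0 ^ 2 = Cc * 2 ^ A := by
      rw [hs0_def]
      exact Real.sq_sqrt (mul_nonneg hCc0 (Real.rpow_nonneg (by norm_num) _))
    have h9 : (s0 * I₁.vol / D ^ β) ^ 2
        = (Cc * 2 ^ A) * I₁.vol ^ 2 * ((D ^ β)⁻¹ * (D ^ β)⁻¹) := by
      rw [div_pow, mul_pow, h8, pow_two (D ^ β), div_eq_mul_inv, mul_inv]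
      try ring
    rw [h9, h7]; ring
  calc (∫⁻ y : Fin n → ℝ, ENNReal.ofReal
        ((∫ z in S, k y z) ^ 2 * (t₁ / (t₁ + ‖y‖)) ^ B / t₁ ^ (n : ℝ))).toReal
        ^ ((1 : ℝ) / 2)
      ≤ (R ^ 2) ^ ((1 : ℝ) / 2) :=
        Real.rpow_le_rpow ENNReal.toReal_nonneg (hval ▸ htoReal) (by norm_num)
    _ = R := by
        rw [← Real.rpow_natCast R 2, ← Real.rpow_mul hR0]
        norm_num
    _ ≤ (s0 + 1) * I₁.vol / D ^ β := by
        rw [hR_def]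
        have hDb : (0:ℝ) < D ^ β := Real.rpow_pos_of_pos hD0 _
        exact (div_le_div_iff_of_pos_right hDb).mpr
          (mul_le_mul_of_nonneg_right (by linarith) hvol0.le)
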